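/- With x^τ = −G(τỹ) + (1/τ)e for ỹ ∈ ℓ¹ satisfying ∑_i ỹ_i > 0, the pairs (x^τ, τỹ) are pairwise non-monotonically related: for 0 < τ ≠ τ' < ∞, ⟨x^τ − x^{τ'}, τỹ − τ'ỹ⟩ = (τ − τ')(1/τ − 1/τ') ∑_i ỹ_i < 0. -/

import Mathlib

open Filter Topology

/-- The Gossez operator, with sequences indexed from `0`:
entry `n` (paper index `n+1`) is `∑_{i ≥ n+1} y i − ∑_{i ≤ n-1} y i`. -/
noncomputable def G (y : ℕ → ℝ) (n : ℕ) : ℝ :=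
  (∑' i : ℕ, y (n + 1 + i)) - ∑ i ∈ Finset.range n, y i

lemma G_eq (y : ℕ → ℝ) (hy : Summable y) (n : ℕ) :
    G y n = (∑' i, y i) - ∑ i ∈ Finset.range (n + 1), y i - ∑ i ∈ Finset.range n, y i := by
  have h := Summable.sum_add_tsum_nat_add (f := y) (n + 1) hy
  have h2 : (∑' i : ℕ, y (n + 1 + i)) = ∑' i : ℕ, y (i + (n + 1)) := by
    congr 1; funext i; rw [add_comm]
  unfold G
  rw [h2]
  linarith

lemma G_smul (y : ℕ → ℝ) (c : ℝ) (n : ℕ) :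
    G (fun i => c * y i) n = c * G y n := by
  unfold G
  simp only [tsum_mul_left, ← Finset.mul_sum]
  ring

lemma G_mul_summable (y : ℕ → ℝ) (hy : Summable fun i => |y i|) :
    Summable fun n => G y n * y n := by
  have hy' : Summable y := hy.of_abs
  set C := ∑' i, |y i| with hC
  have hbound : ∀ n, |G y n| ≤ 2 * C + C := by
    intro n
    rw [G_eq y hy' n]
    have h1 : |∑' i, y i| ≤ C := by
      have := norm_tsum_le_tsum_norm (f := y) (by simpa using hy)
      simpa using this
    have h2 : ∀ m, |∑ i ∈ Finset.range m, y i| ≤ C := by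
      intro m
      calc |∑ i ∈ Finset.range m, y i| ≤ ∑ i ∈ Finset.range m, |y i| :=
            Finset.abs_sum_le_sum_abs _ _
        _ ≤ C := Summable.sum_le_tsum _ (fun i _ => abs_nonneg _) hy
    calc |(∑' i, y i) - ∑ i ∈ Finset.range (n+1), y i - ∑ i ∈ Finset.range n, y i|
        ≤ |(∑' i, y i) - ∑ i ∈ Finset.range (n+1), y i| + |∑ i ∈ Finset.range n, y i| :=
          abs_sub _ _
      _ ≤ (|∑' i, y i| + |∑ i ∈ Finset.range (n+1), y i|) + |∑ i ∈ Finset.range n, y i| := by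
          gcongr; exact abs_sub _ _
      _ ≤ 2 * C + C := by have := h2 (n+1); have := h2 n; linarith
  apply Summable.of_abs
  have hle : ∀ n, |G y n * y n| ≤ (2 * C + C) * |y n| := by
    intro n
    rw [abs_mul]
    exact mul_le_mul_of_nonneg_right (hbound n) (abs_nonneg _)
  exact Summable.of_nonneg_of_le (fun n => abs_nonneg _) hle (hy.mul_left _)

lemma partial_sum (y : ℕ → ℝ) (hy : Summable y) (N : ℕ) :
    ∑ n ∈ Finset.range N, G y n * y n =
      (∑' i, y i) * (∑ i ∈ Finset.range N, y i) - (∑ i ∈ Finset.range N, y i) ^ 2 := by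
  induction N with
  | zero => simp
  | succ N ih =>
      rw [Finset.sum_range_succ, ih, G_eq y hy N, Finset.sum_range_succ (f := y) (n := N)]
      ring

lemma key (y : ℕ → ℝ) (hy : Summable fun i => |y i|) :
    ∑' n, G y n * y n = 0 := by
  have hy' : Summable y := hy.of_abs
  have hsum := G_mul_summable y hy
  have hSnlim : Tendsto (fun N => ∑ i ∈ Finset.range N, y i) atTop (𝓝 (∑' i, y i)) :=
    hy'.hasSum.tendsto_sum_nat
  have hlim : Tendsto (fun N => ∑ n ∈ Finset.range N, G y n * y n) atTop (𝓝 0) := by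
    have h1 : Tendsto (fun N => (∑' i, y i) * (∑ i ∈ Finset.range N, y i)
        - (∑ i ∈ Finset.range N, y i) ^ 2) atTop
        (𝓝 ((∑' i, y i) * (∑' i, y i) - (∑' i, y i) ^ 2)) :=
      (hSnlim.const_mul _).sub (hSnlim.pow 2)
    have h2 : (∑' i, y i) * (∑' i, y i) - (∑' i, y i) ^ 2 = 0 := by ring
    rw [h2] at h1
    simpa only [partial_sum y hy'] using h1
  exact tendsto_nhds_unique hsum.hasSum.tendsto_sum_nat hlim

/-- The pairs `(x^τ, τ • ytil)` are pairwise non-monotonically related: for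
`0 < τ ≠ τ' `, `⟪x^τ - x^τ', τ ytil - τ' ytil⟫ = (τ-τ')(1/τ-1/τ') ∑ i, ytil i < 0`. -/
theorem extension_points_not_monotone (ytil : ℕ → ℝ) (τ τ' : ℝ)
    (hytil : Summable fun i => |ytil i|) (hpos : 0 < ∑' i, ytil i)
    (hτ : 0 < τ) (hτ' : 0 < τ') (hne : τ ≠ τ') :
    (∑' n, (((-G (fun i => τ * ytil i) n + 1 / τ)
          - (-G (fun i => τ' * ytil i) n + 1 / τ')) * (τ * ytil n - τ' * ytil n))
        = (τ - τ') * (1 / τ - 1 / τ') * ∑' i, ytil i) ∧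
    (τ - τ') * (1 / τ - 1 / τ') * (∑' i, ytil i) < 0 := by
  have hy' : Summable ytil := hytil.of_abs
  have hGy := G_mul_summable ytil hytil
  constructor
  · have hterm : ∀ n, ((-G (fun i => τ * ytil i) n + 1 / τ)
          - (-G (fun i => τ' * ytil i) n + 1 / τ')) * (τ * ytil n - τ' * ytil n)
        = (-(τ - τ') ^ 2) * (G ytil n * ytil n)
          + ((τ - τ') * (1 / τ - 1 / τ')) * ytil n := by
      intro n
      rw [G_smul, G_smul]
      ring
    calc (∑' n, ((-G (fun i => τ * ytil i) n + 1 / τ)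
          - (-G (fun i => τ' * ytil i) n + 1 / τ')) * (τ * ytil n - τ' * ytil n))
        = ∑' n, ((-(τ - τ') ^ 2) * (G ytil n * ytil n)
            + ((τ - τ') * (1 / τ - 1 / τ')) * ytil n) := tsum_congr hterm
      _ = (∑' n, (-(τ - τ') ^ 2) * (G ytil n * ytil n))
            + ∑' n, ((τ - τ') * (1 / τ - 1 / τ')) * ytil n :=
          Summable.tsum_add (hGy.mul_left _) (hy'.mul_left _)
      _ = (-(τ - τ') ^ 2) * (∑' n, G ytil n * ytil n)
            + ((τ - τ') * (1 / τ - 1 / τ')) * ∑' n, ytil n := by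
          rw [tsum_mul_left, tsum_mul_left]
      _ = (τ - τ') * (1 / τ - 1 / τ') * ∑' i, ytil i := by
          simp [key ytil hytil]
  · apply mul_neg_of_neg_of_pos _ hpos
    have h1 : 1 / τ - 1 / τ' = (τ' - τ) / (τ * τ') := by
      field_simp
    rw [h1]
    have hττ' : 0 < τ * τ' := mul_pos hτ hτ'
    have hsq : 0 < (τ - τ') ^ 2 := by
      have : τ - τ' ≠ 0 := sub_ne_zero.mpr hne
      positivity
    have h2 : (τ - τ') * ((τ' - τ) / (τ * τ')) = -((τ - τ') ^ 2) / (τ * τ') := by ring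
    rw [h2]
    exact div_neg_of_neg_of_pos (by linarith) hττ'
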